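/- Let R be a graded integral domain. If the polynomial ring R[X] is a graded radically principal ring, then R is first strongly graded. -/

import Mathlib

open DirectSum Pointwise

variable {G A : Type*} [AddGroup G] [DecidableEq G] [CommRing A]

def gradedRadical (𝒜 : G → AddSubgroup A) [GradedRing 𝒜] (I : Ideal A) : Set A :=
  {x | ∀ g : G, ∃ n : ℕ, ((DirectSum.decompose 𝒜 x g : A)) ^ n ∈ I}

def IsGradedRadicallyPrincipal (𝒜 : G → AddSubgroup A) [GradedRing 𝒜] (I : Ideal A) : Prop :=
  ∃ c : A, SetLike.IsHomogeneousElem 𝒜 c ∧ gradedRadical 𝒜 I = gradedRadical 𝒜 (Ideal.span {c})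

def GradedRadicallyPrincipalRing (𝒜 : G → AddSubgroup A) [GradedRing 𝒜] : Prop :=
  ∀ I : Ideal A, I.IsHomogeneous 𝒜 → IsGradedRadicallyPrincipal 𝒜 I

def IsGradedPrime (𝒜 : G → AddSubgroup A) [GradedRing 𝒜] (P : Ideal A) : Prop :=
  P ≠ ⊤ ∧ P.IsHomogeneous 𝒜 ∧
    ∀ ⦃x y : A⦄, SetLike.IsHomogeneousElem 𝒜 x → SetLike.IsHomogeneousElem 𝒜 y → x * y ∈ P →
      x ∈ P ∨ y ∈ P

theorem hom_mem_gradedRadical (𝒜 : G → AddSubgroup A) [GradedRing 𝒜] {I : Ideal A} {x : A}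
    {i : G} (hx : x ∈ 𝒜 i) (hxI : x ∈ I) : x ∈ gradedRadical 𝒜 I := by
  intro j
  by_cases hij : i = j
  · exact ⟨1, by rw [DirectSum.decompose_of_mem_same 𝒜 (hij ▸ hx), pow_one]; exact hxI⟩
  · exact ⟨1, by rw [DirectSum.decompose_of_mem_ne 𝒜 hx hij, pow_one]; exact I.zero_mem⟩

theorem stmt_18 (𝒜 : G → AddSubgroup A) [GradedRing 𝒜]
    (hdom : ∀ x y : A, SetLike.IsHomogeneousElem 𝒜 x → SetLike.IsHomogeneousElem 𝒜 y →
      x * y = 0 → x = 0 ∨ y = 0)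
    (ℬ : G × ℤ → AddSubgroup (Polynomial A)) [GradedRing ℬ]
    (hℬ : ∀ (g : G) (n : ℕ), (ℬ (g, (n : ℤ)) : Set (Polynomial A)) =
      {p | ∃ a ∈ 𝒜 g, p = Polynomial.C a * Polynomial.X ^ n})
    (hℬneg : ∀ (g : G) (n : ℤ), n < 0 → ℬ (g, n) = ⊥)
    (hRP : GradedRadicallyPrincipalRing ℬ) :
    ∀ g : G, 𝒜 g ≠ ⊥ → (1 : A) ∈ ((𝒜 g : Set A) * (𝒜 (-g) : Set A)) := by
  intro g hg
  obtain ⟨a, ha, ha0⟩ : ∃ a ∈ 𝒜 g, a ≠ 0 := by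
    by_contra hcon
    push_neg at hcon
    exact hg ((AddSubgroup.eq_bot_iff_forall _).2 hcon)
  have : Nontrivial A := ⟨a, 0, ha0⟩
  -- homogeneity of C a and X
  have hCa : (Polynomial.C a : Polynomial A) ∈ ℬ (g, (0 : ℤ)) := by
    have h0 := hℬ g 0
    rw [Nat.cast_zero] at h0
    rw [← SetLike.mem_coe, h0]
    exact ⟨a, ha, by simp⟩
  have hX : (Polynomial.X : Polynomial A) ∈ ℬ (0, (1 : ℤ)) := by
    have h1 := hℬ 0 1
    rw [Nat.cast_one] at h1
    rw [← SetLike.mem_coe, h1]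
    exact ⟨1, SetLike.GradedOne.one_mem, by simp⟩
  set I : Ideal (Polynomial A) :=
    Ideal.span {Polynomial.C a, Polynomial.X} with hI
  have hIhom : I.IsHomogeneous ℬ := by
    apply Ideal.homogeneous_span
    rintro x (rfl | rfl)
    · exact ⟨(g, 0), hCa⟩
    · exact ⟨(0, 1), hX⟩
  obtain ⟨c, ⟨⟨h, m⟩, hc⟩, heq⟩ := hRP I hIhom
  -- X^n ∈ span {c}
  have hXrad : (Polynomial.X : Polynomial A) ∈ gradedRadical ℬ (Ideal.span {c}) := by
    rw [← heq]
    exact hom_mem_gradedRadical ℬ hX (Ideal.subset_span (by simp))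
  obtain ⟨n, hn⟩ := hXrad (0, 1)
  rw [DirectSum.decompose_of_mem_same ℬ hX] at hn
  obtain ⟨f, hf⟩ := Ideal.mem_span_singleton'.mp hn
  -- c ≠ 0
  have hc0 : c ≠ 0 := by
    rintro rfl
    rw [mul_zero] at hf
    exact (Polynomial.monic_X_pow n).ne_zero hf.symm
  -- m ≥ 0 and c = C b * X ^ m
  have hm : 0 ≤ m := by
    by_contra hmlt
    push_neg at hmlt
    rw [hℬneg h m hmlt] at hc
    exact hc0 hc
  lift m to ℕ using hm
  have hcset := hℬ h m
  rw [← SetLike.mem_coe, hcset] at hc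
  obtain ⟨b, hb, hcb⟩ := hc
  -- b is a unit : b * v = 1
  set v : A := (Polynomial.X ^ m * f).coeff n with hv
  have hbv : b * v = 1 := by
    have hmul : Polynomial.C b * (Polynomial.X ^ m * f) = Polynomial.X ^ n := by
      rw [← hf, hcb]; ring
    have h2 := congrArg (fun p => Polynomial.coeff p n) hmul
    simpa [Polynomial.coeff_C_mul] using h2
  set u : A := (DirectSum.decompose 𝒜 v (-h) : A) with hu
  have hbu : b * u = 1 := by
    have hkey := DirectSum.coe_decompose_mul_add_of_left_mem 𝒜 (j := -h) hb (b := v)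
    rw [hbv, add_neg_cancel, DirectSum.decompose_of_mem_same 𝒜 SetLike.GradedOne.one_mem]
      at hkey
    exact hkey.symm
  have humem : u ∈ 𝒜 (-h) := SetLike.coe_mem _
  -- (C a)^k ∈ span {c}
  have hCarad : (Polynomial.C a : Polynomial A) ∈ gradedRadical ℬ (Ideal.span {c}) := by
    rw [← heq]
    exact hom_mem_gradedRadical ℬ hCa (Ideal.subset_span (by simp))
  obtain ⟨k, hk⟩ := hCarad (g, 0)
  rw [DirectSum.decompose_of_mem_same ℬ hCa] at hk
  obtain ⟨p, hp⟩ := Ideal.mem_span_singleton'.mp hk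
  -- a ^ k ≠ 0
  have hak : ∀ j : ℕ, a ^ j ≠ 0 := by
    intro j
    induction j with
    | zero => simpa using one_ne_zero
    | succ j ih =>
      intro hz
      rw [pow_succ] at hz
      rcases hdom _ _ ⟨j • g, SetLike.pow_mem_graded j ha⟩ ⟨g, ha⟩ hz with h1 | h1
      · exact ih h1
      · exact ha0 h1
  -- m = 0
  have hm0 : m = 0 := by
    by_contra hmne
    have hmpos : 1 ≤ m := Nat.pos_of_ne_zero hmne
    have hmul : Polynomial.C b * (Polynomial.X ^ m * p) = Polynomial.C (a ^ k) := by
      rw [Polynomial.C_pow, ← hp, hcb]; ring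
    have h2 := congrArg (fun q => Polynomial.coeff q 0) hmul
    have h0 : (Polynomial.X ^ m * p).coeff 0 = 0 := by
      rw [Polynomial.X_pow_mul, Polynomial.coeff_mul_X_pow']
      simp [Nat.not_le.mpr hmpos]
    simp only [Polynomial.coeff_C_mul, h0, mul_zero, Polynomial.coeff_C, if_pos rfl, if_true] at h2
    exact hak k h2.symm
  subst hm0
  have hcC : c = Polynomial.C b := by simpa using hcb
  -- c ^ t ∈ I
  have hcIdx : c ∈ ℬ (h, ((0 : ℕ) : ℤ)) := by
    rw [← SetLike.mem_coe, hcset]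
    exact ⟨b, hb, hcb⟩
  have hcrad : c ∈ gradedRadical ℬ I := by
    rw [heq]
    exact hom_mem_gradedRadical ℬ hcIdx (Ideal.mem_span_singleton_self c)
  obtain ⟨t, ht⟩ := hcrad (h, ((0 : ℕ) : ℤ))
  rw [DirectSum.decompose_of_mem_same ℬ hcIdx] at ht
  rw [hI] at ht
  obtain ⟨p', q', hpq⟩ := Ideal.mem_span_pair.mp ht
  -- b ^ t = a * s
  set s : A := p'.coeff 0 with hs
  have hbt : b ^ t = a * s := by
    have h2 := congrArg (fun q => Polynomial.coeff q 0) hpq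
    simp only [hcC, ← Polynomial.C_pow, Polynomial.coeff_add, Polynomial.coeff_mul_C,
      Polynomial.coeff_mul_X_zero, Polynomial.coeff_C, if_pos rfl, if_true, add_zero] at h2
    rw [← h2, hs, mul_comm]
  -- homogeneous component of s
  set s' : A := (DirectSum.decompose 𝒜 s (-g + t • h) : A) with hs'
  have hbts : b ^ t = a * s' := by
    have hkey := DirectSum.coe_decompose_mul_add_of_left_mem 𝒜 (j := -g + t • h) ha (b := s)
    rw [← hbt, add_neg_cancel_left,
      DirectSum.decompose_of_mem_same 𝒜 (SetLike.pow_mem_graded t hb)] at hkey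
    exact hkey
  have hs'mem : s' ∈ 𝒜 (-g + t • h) := SetLike.coe_mem _
  -- conclude
  set y : A := s' * u ^ t with hy
  have hymem : y ∈ 𝒜 (-g) := by
    have hmm := SetLike.mul_mem_graded hs'mem (SetLike.pow_mem_graded t humem)
    rwa [show (-g + t • h) + t • (-h) = -g by
      rw [show t • (-h) = -(t • h) by simp, add_assoc, add_neg_cancel, add_zero]] at hmm
  have hay : a * y = 1 := by
    rw [hy, show a * (s' * u ^ t) = u ^ t * (a * s') by ring, ← hbts, ← mul_pow,
      mul_comm u b, hbu, one_pow]
  rw [show (1 : A) = a * y from hay.symm]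
  exact Set.mul_mem_mul ha hymem
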